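/- Let C be a linear [n,k] code over F_q with k < n. Then the generalized covering radii of C are monotone non-decreasing, R_1(C) ≤ R_2(C) ≤ ... ≤ R_{n−k}(C), and moreover R_{n−k}(C) = n − k. -/

import Mathlib

/-- The `t`-th generalized covering radius of a linear code `C ⊆ F^n`. -/
noncomputable def genCovRad {F : Type*} [Field F] {n : ℕ} (C : Submodule F (Fin n → F))
    (t : ℕ) : ℕ :=
  sInf { r | ∀ v : Fin t → (Fin n → F), ∃ c : Fin t → (Fin n → F),
    (∀ i, c i ∈ C) ∧ ∃ I : Finset (Fin n), I.card = r ∧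
      ∀ i j, (v i - c i) j ≠ 0 → j ∈ I }

open Module Submodule

section aux
variable {F : Type*} [Field F] {n : ℕ}

/-- Submodule of vectors supported inside `I`. -/
def vanishOff (F : Type*) [Field F] {n : ℕ} (I : Finset (Fin n)) :
    Submodule F (Fin n → F) where
  carrier := {x | ∀ j, j ∉ I → x j = 0}
  add_mem' := by intro a b ha hb j hj; simp [ha j hj, hb j hj]
  zero_mem' := by intro j hj; rfl
  smul_mem' := by intro c x hx j hj; simp [hx j hj]

lemma mem_vanishOff {I : Finset (Fin n)} {x : Fin n → F} :
    x ∈ vanishOff F I ↔ ∀ j, j ∉ I → x j = 0 := Iff.rfl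

lemma finrank_vanishOff_le (I : Finset (Fin n)) :
    finrank F (vanishOff F I) ≤ I.card := by
  have hinj : Function.Injective
      ((LinearMap.funLeft F F (fun j : I => (j : Fin n))).comp (vanishOff F I).subtype) := by
    intro x y h
    ext j
    by_cases hj : j ∈ I
    · exact congrFun h ⟨j, hj⟩
    · rw [x.2 j hj, y.2 j hj]
  have := LinearMap.finrank_le_finrank_of_injective hinj
  simpa [Module.finrank_pi, Fintype.card_coe] using this
end aux

section info
variable {F : Type*} [Field F] {n k : ℕ}

lemma exists_info_set (C : Submodule F (Fin n → F)) (hdim : finrank F C = k) (hkn : k < n) :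
    ∃ I : Finset (Fin n), I.card = n - k ∧ Submodule.map C.mkQ (vanishOff F I) = ⊤ := by
  classical
  have _ : True := trivial
  have hn : finrank F (Fin n → F) = n := by
    simp [Module.finrank_fin_fun]
  have hQ : finrank F ((Fin n → F) ⧸ C) = n - k := by
    have h := Submodule.finrank_quotient_add_finrank C
    rw [hdim, hn] at h
    omega
  set u : Fin n → ((Fin n → F) ⧸ C) := fun j => C.mkQ (Pi.single j 1) with hu
  have hsingle : Submodule.span F (Set.range fun j : Fin n => Pi.single j (1:F)) = ⊤ := by
    have hfun : ⇑(Pi.basisFun F (Fin n)) = fun j : Fin n => Pi.single j (1:F) := by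
      funext j
      simp [Pi.basisFun_apply]
    rw [← hfun, (Pi.basisFun F (Fin n)).span_eq]
  have hspanu : Submodule.span F (Set.range u) = ⊤ := by
    rw [hu]
    have h1 : Set.range (fun j => C.mkQ (Pi.single j (1:F))) =
        C.mkQ '' (Set.range fun j => Pi.single j (1:F)) := by
      rw [← Set.range_comp]; rfl
    rw [h1, ← Submodule.map_span, hsingle, Submodule.map_top, Submodule.range_mkQ]
  obtain ⟨b, hbsub, hbspan, hbind⟩ := exists_linearIndependent F (Set.range u)
  rw [hspanu] at hbspan
  have hbfin : b.Finite := hbind.setFinite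
  haveI : Fintype b := hbfin.fintype
  have hbcard : b.toFinset.card = n - k := by
    have h2 := finrank_span_set_eq_card hbind
    rw [hbspan, finrank_top] at h2
    omega
  have hsel : ∀ x ∈ b, ∃ j, u j = x := fun x hx => hbsub hx
  set g : ((Fin n → F) ⧸ C) → Fin n := fun x =>
    if h : ∃ j, u j = x then h.choose else ⟨0, lt_of_le_of_lt (Nat.zero_le k) hkn⟩ with hg
  have hug : ∀ x ∈ b, u (g x) = x := by
    intro x hx
    have h := hsel x hx
    simp only [hg, dif_pos h]
    exact h.choose_spec
  refine ⟨b.toFinset.image g, ?_, ?_⟩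
  · rw [Finset.card_image_of_injOn, hbcard]
    intro x hx y hy hxy
    simp only [Finset.mem_coe, Set.mem_toFinset] at hx hy
    rw [← hug x hx, ← hug y hy, hxy]
  · rw [eq_top_iff, ← hbspan, Submodule.span_le]
    intro x hx
    refine ⟨Pi.single (g x) 1, ?_, hug x hx⟩
    intro j hj
    have hmem : g x ∈ b.toFinset.image g :=
      Finset.mem_image_of_mem g (Set.mem_toFinset.mpr hx)
    have hne : j ≠ g x := by rintro rfl; exact hj hmem
    rw [Pi.single_eq_of_ne hne]
end info

/-- For an `[n,k]` code over `F_q` with `k < n`, the generalized covering radii are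
monotone non-decreasing, `R_1 ≤ R_2 ≤ ⋯ ≤ R_{n−k}`, and `R_{n−k} = n − k`. -/
theorem stmt5 {F : Type*} [Field F] [Fintype F] {q n k : ℕ}
    (hq : Fintype.card F = q) (hkn : k < n)
    (C : Submodule F (Fin n → F)) (hdim : Module.finrank F C = k) :
    (∀ t₁ t₂ : ℕ, 1 ≤ t₁ → t₁ ≤ t₂ → t₂ ≤ n - k → genCovRad C t₁ ≤ genCovRad C t₂) ∧
    genCovRad C (n - k) = n - k := by
  classical
  set S : ℕ → Set ℕ := fun t => { r | ∀ v : Fin t → (Fin n → F), ∃ c : Fin t → (Fin n → F),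
    (∀ i, c i ∈ C) ∧ ∃ I : Finset (Fin n), I.card = r ∧
      ∀ i j, (v i - c i) j ≠ 0 → j ∈ I } with hS
  have hgen : ∀ t, genCovRad C t = sInf (S t) := fun t => rfl
  obtain ⟨I₀, hI₀card, hI₀top⟩ := exists_info_set C hdim hkn
  have hmem : ∀ t : ℕ, (n - k) ∈ S t := by
    intro t v
    have hch : ∀ i, ∃ w, w ∈ vanishOff F I₀ ∧ C.mkQ w = C.mkQ (v i) := by
      intro i
      have : C.mkQ (v i) ∈ Submodule.map C.mkQ (vanishOff F I₀) := by
        rw [hI₀top]; exact Submodule.mem_top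
      obtain ⟨w, hw1, hw2⟩ := this
      exact ⟨w, hw1, hw2⟩
    choose w hw1 hw2 using hch
    refine ⟨fun i => v i - w i, ?_, I₀, hI₀card, ?_⟩
    · intro i
      have h0 : C.mkQ (v i - w i) = 0 := by rw [map_sub, hw2]; simp
      rwa [Submodule.mkQ_apply, Submodule.Quotient.mk_eq_zero] at h0
    · intro i j hj
      by_contra hjI
      exact hj (by rw [sub_sub_cancel]; exact (hw1 i) j hjI)
  have hne : ∀ t, (S t).Nonempty := fun t => ⟨n - k, hmem t⟩
  have hmono : ∀ t₁ t₂ : ℕ, t₁ ≤ t₂ → S t₂ ⊆ S t₁ := by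
    intro t₁ t₂ h12 r hr v
    set v' : Fin t₂ → (Fin n → F) := fun i => if h : (i : ℕ) < t₁ then v ⟨i, h⟩ else 0 with hv'
    obtain ⟨c', hc', I, hIcard, hIsupp⟩ := hr v'
    refine ⟨fun i => c' (Fin.castLE h12 i), fun i => hc' _, I, hIcard, ?_⟩
    intro i j hj
    have hvv : v' (Fin.castLE h12 i) = v i := by
      rw [hv']
      simp only [Fin.coe_castLE]
      rw [dif_pos i.isLt]
    exact hIsupp (Fin.castLE h12 i) j (by rwa [hvv])
  have hub : ∀ t, genCovRad C t ≤ n - k := fun t => Nat.sInf_le (hmem t)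
  have hn : finrank F (Fin n → F) = n := by simp [Module.finrank_fin_fun]
  have hQ : finrank F ((Fin n → F) ⧸ C) = n - k := by
    have h := Submodule.finrank_quotient_add_finrank C
    rw [hdim, hn] at h
    omega
  have hlb : n - k ≤ genCovRad C (n - k) := by
    have hr : genCovRad C (n - k) ∈ S (n - k) := Nat.sInf_mem (hne (n - k))
    let b := Module.finBasis F ((Fin n → F) ⧸ C)
    set b' : Fin (n - k) → ((Fin n → F) ⧸ C) := fun i => b (Fin.cast hQ.symm i) with hb'
    have hsurj := Submodule.mkQ_surjective C
    choose vv hvv using fun i : Fin (n - k) => hsurj (b' i)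
    obtain ⟨c, hc, I, hIcard, hIsupp⟩ := hr vv
    have hbW : ∀ i, b' i ∈ Submodule.map C.mkQ (vanishOff F I) := by
      intro i
      refine ⟨vv i - c i, ?_, ?_⟩
      · intro j hj
        by_contra h0
        exact hj (hIsupp i j h0)
      · rw [map_sub, hvv i]
        have : C.mkQ (c i) = 0 := (Submodule.Quotient.mk_eq_zero C).mpr (hc i)
        rw [this, sub_zero]
    have hind : LinearIndependent F b' :=
      b.linearIndependent.comp _ (Fin.cast_injective _)
    have hspan : Submodule.span F (Set.range b') ≤ Submodule.map C.mkQ (vanishOff F I) :=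
      Submodule.span_le.mpr (Set.range_subset_iff.mpr hbW)
    have h1 : finrank F (Submodule.span F (Set.range b')) = n - k := by
      rw [finrank_span_eq_card hind, Fintype.card_fin]
    calc n - k = finrank F (Submodule.span F (Set.range b')) := h1.symm
      _ ≤ finrank F (Submodule.map C.mkQ (vanishOff F I)) := Submodule.finrank_mono hspan
      _ ≤ finrank F (vanishOff F I) := Submodule.finrank_map_le _ _
      _ ≤ I.card := finrank_vanishOff_le I
      _ = genCovRad C (n - k) := hIcard
  refine ⟨?_, le_antisymm (hub _) hlb⟩
  intro t₁ t₂ _ h12 _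
  exact Nat.sInf_le (hmono t₁ t₂ h12 (Nat.sInf_mem (hne t₂)))
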